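/- arXiv:2102.05616 — 13 statements merged into one kernel-verified Lean document; each statement's English description precedes it below -/
import Mathlib

section
/- For every binary relation R on a set X, the relation R² equals the intersection of all maximal asymmetric sub-relations of R: for all x, y, one has x R² y if and only if x R' y holds for every relation R' that is a maximal element (with respect to inclusion) of the set of asymmetric sub-relations of R. -/
/-- Every asymmetric sub-relation of `R` extends to a maximal one. -/
lemma exists_maximal_ext {X : Type*} (R : X → X → Prop) (S₀ : X → X → Prop)
    (hsub : ∀ a b, S₀ a b → R a b) (hasym : ∀ a b, S₀ a b → ¬ S₀ b a) :
    ∃ R' : X → X → Prop,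
      (∀ a b, S₀ a b → R' a b) ∧
      (∀ a b, R' a b → R a b) ∧ (∀ a b, R' a b → ¬ R' b a) ∧
      (∀ S : X → X → Prop, (∀ a b, S a b → R a b) → (∀ a b, S a b → ¬ S b a) →
        (∀ a b, R' a b → S a b) → (∀ a b, S a b → R' a b)) := by
  classical
  set coll : Set (Set (X × X)) :=
    {s | (∀ p ∈ s, R p.1 p.2) ∧ ∀ p ∈ s, (p.2, p.1) ∉ s} with hcoll
  have h0 : {p : X × X | S₀ p.1 p.2} ∈ coll := by
    constructor
    · intro p hp; exact hsub _ _ hp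
    · intro p hp hq; exact hasym _ _ hp hq
  obtain ⟨m, hsm, hm⟩ := zorn_subset_nonempty coll (fun c hc hchain hne => by
      refine ⟨⋃₀ c, ⟨?_, ?_⟩, fun s hs => Set.subset_sUnion_of_mem hs⟩
      · rintro p ⟨s, hs, hps⟩
        exact (hc hs).1 p hps
      · rintro p ⟨s, hs, hps⟩ ⟨t, ht, hpt⟩
        rcases hchain.total hs ht with h | h
        · exact (hc ht).2 _ (h hps) hpt
        · exact (hc hs).2 _ hps (h hpt))
    _ h0
  refine ⟨fun a b => (a, b) ∈ m, fun a b h => hsm h, fun a b h => hm.prop.1 _ h,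
    fun a b h => hm.prop.2 _ h, ?_⟩
  intro S hS1 hS2 hS3 a b hab
  have : {p : X × X | S p.1 p.2} ⊆ m := by
    refine hm.2 ⟨fun p hp => hS1 _ _ hp, fun p hp hq => hS2 _ _ hp hq⟩ ?_
    intro p hp; exact hS3 _ _ hp
  exact this hab

/-- `R²` (defined by `x R² y ↔ x R y ∧ ¬ y R x`) equals the intersection of all
maximal asymmetric sub-relations of `R`. -/
theorem asymmetric_kernel_eq_inter_maximal {X : Type*} (R : X → X → Prop) (x y : X) :
    (R x y ∧ ¬ R y x) ↔
    (∀ R' : X → X → Prop,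
      ((∀ a b, R' a b → R a b) ∧ (∀ a b, R' a b → ¬ R' b a) ∧
       (∀ S : X → X → Prop, (∀ a b, S a b → R a b) → (∀ a b, S a b → ¬ S b a) →
         (∀ a b, R' a b → S a b) → (∀ a b, S a b → R' a b))) →
      R' x y) := by
  classical
  constructor
  · rintro ⟨hxy, hnyx⟩ R' ⟨hsub, hasym, hmax⟩
    -- add (x,y) to R'
    have hne : x ≠ y := fun h => hnyx (h ▸ hxy)
    set S : X → X → Prop := fun a b => R' a b ∨ (a = x ∧ b = y) with hS
    have hS1 : ∀ a b, S a b → R a b := by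
      rintro a b (h | ⟨rfl, rfl⟩)
      · exact hsub _ _ h
      · exact hxy
    have hS2 : ∀ a b, S a b → ¬ S b a := by
      rintro a b (h | ⟨ha, hb⟩) (h' | ⟨hb', ha'⟩)
      · exact hasym _ _ h h'
      · subst hb'; subst ha'; exact hnyx (hsub _ _ h)
      · subst ha; subst hb; exact hnyx (hsub _ _ h')
      · exact hne (ha.symm.trans ha')
    exact hmax S hS1 hS2 (fun a b h => Or.inl h) _ _ (Or.inr ⟨rfl, rfl⟩)
  · intro h
    obtain ⟨R', _, hsub, hasym, hmax⟩ :=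
      exists_maximal_ext R (fun _ _ => False) (fun a b h => h.elim) (fun a b h => h.elim)
    have hxy : R x y := hsub _ _ (h R' ⟨hsub, hasym, hmax⟩)
    have hne : x ≠ y := fun he => hasym _ _ (h R' ⟨hsub, hasym, hmax⟩)
      (he ▸ h R' ⟨hsub, hasym, hmax⟩)
    refine ⟨hxy, fun hyx => ?_⟩
    obtain ⟨R'', hext, hsub', hasym', hmax'⟩ :=
      exists_maximal_ext R (fun a b => a = y ∧ b = x)
        (by rintro a b ⟨rfl, rfl⟩; exact hyx)
        (by rintro a b ⟨rfl, rfl⟩ ⟨he, _⟩; exact hne he)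
    exact hasym' _ _ (h R'' ⟨hsub', hasym', hmax'⟩) (hext _ _ ⟨rfl, rfl⟩)
end

section
/- If a binary relation R on a set X is symmetric and satisfies semi-order property 2, then its complement Rᶜ is transitive. -/
/-- If `R` is symmetric and satisfies semi-order property 2, then its complement
is transitive. -/
theorem sym_semiOrd2_imp_complement_trans {X : Type*} (R : X → X → Prop)
    (hsym : ∀ x y, R x y → R y x)
    (hso2 : ∀ w x y z, R x y → R y z →
      (R w x ∨ R x w ∨ R w y ∨ R y w ∨ R w z ∨ R z w)) :
    ∀ x y z, ¬ R x y → ¬ R y z → ¬ R x z := by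
  intro x y z hxy hyz hxz
  rcases hso2 y x z x hxz (hsym x z hxz) with h|h|h|h|h|h
  · exact hxy (hsym y x h)
  · exact hxy h
  · exact hyz h
  · exact hyz (hsym z y h)
  · exact hxy (hsym y x h)
  · exact hxy h
end

section
/- If a binary relation R on a set X is symmetric and satisfies semi-order property 1, then its complement Rᶜ also satisfies semi-order property 1. -/
/-- If `R` is symmetric and satisfies semi-order property 1, then its complement
also satisfies semi-order property 1. -/
theorem sym_semiOrd1_imp_complement_semiOrd1 {X : Type*} (R : X → X → Prop)
    (hsym : ∀ x y, R x y → R y x)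
    (hso1 : ∀ w x y z, R w x → ¬ R x y → ¬ R y x → R y z → R w z) :
    ∀ w x y z, ¬ R w x → ¬ (¬ R x y) → ¬ (¬ R y x) → ¬ R y z → ¬ R w z := by
  intro w x y z hwx hxy hyx hyz hwz
  exact hyz (hso1 y x w z (not_not.mp hyx) (fun h => hwx (hsym x w h)) hwx hwz)
end

section
/- A binary relation R on a set X is symmetric if and only if the relation R⁶ is transitive. -/
/-- `R` is symmetric iff `R⁶` (exactly one of `x R y`, `y R x`) is transitive. -/
theorem symmetric_iff_r6_transitive {X : Type*} (R : X → X → Prop) :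
    (∀ x y, R x y → R y x) ↔
    (∀ x y z, ((R x y ∧ ¬ R y x) ∨ (R y x ∧ ¬ R x y)) →
      ((R y z ∧ ¬ R z y) ∨ (R z y ∧ ¬ R y z)) →
      ((R x z ∧ ¬ R z x) ∨ (R z x ∧ ¬ R x z))) := by
  constructor
  · intro h x y z h1 _
    rcases h1 with ⟨hxy, hnyx⟩ | ⟨hyx, hnxy⟩
    · exact absurd (h x y hxy) hnyx
    · exact absurd (h y x hyx) hnxy
  · intro h x y hxy
    by_contra hnyx
    have := h x y x (Or.inl ⟨hxy, hnyx⟩) (Or.inr ⟨hxy, hnyx⟩)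
    tauto
end

section
/- A binary relation R on a set X is symmetric if and only if the relation R⁹ satisfies semi-order property 2. -/
/-- `R` is symmetric iff `R⁹` (defined by `x R⁹ y ↔ (x R y ↔ y R x)`) satisfies
semi-order property 2. -/
theorem symmetric_iff_r9_semiOrd2 {X : Type*} (R : X → X → Prop) :
    (∀ x y, R x y → R y x) ↔
    (∀ w x y z, (R x y ↔ R y x) → (R y z ↔ R z y) →
      ((R w x ↔ R x w) ∨ (R x w ↔ R w x) ∨ (R w y ↔ R y w) ∨ (R y w ↔ R w y) ∨
       (R w z ↔ R z w) ∨ (R z w ↔ R w z))) := by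
  constructor
  · intro hs w x y z _ _
    exact Or.inl ⟨hs w x, hs x w⟩
  · intro h x y hxy
    rcases h x y y y Iff.rfl Iff.rfl with h1|h1|h1|h1|h1|h1 <;> tauto
end

section
/- If a binary relation R on a set X is left Euclidean, then the relation R⁶ is anti-transitive. -/
/-- If `R` is left Euclidean, then `R⁶` (exactly one of `x R y`, `y R x`) is
anti-transitive. -/
theorem leftEuclidean_imp_r6_antitransitive {X : Type*} (R : X → X → Prop)
    (hle : ∀ x y z, R y x → R z x → R y z) :
    ∀ x y z, ((R x y ∧ ¬ R y x) ∨ (R y x ∧ ¬ R x y)) →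
      ((R y z ∧ ¬ R z y) ∨ (R z y ∧ ¬ R y z)) →
      ¬ ((R x z ∧ ¬ R z x) ∨ (R z x ∧ ¬ R x z)) := by
  intro x y z h1 h2 h3
  rcases h1 with ⟨a1, a2⟩ | ⟨a1, a2⟩ <;>
  rcases h2 with ⟨b1, b2⟩ | ⟨b1, b2⟩ <;>
  rcases h3 with ⟨c1, c2⟩ | ⟨c1, c2⟩ <;>
  first
  | exact a2 (hle _ _ _ b1 c1)
  | exact b2 (hle _ _ _ c1 a1)
  | exact c2 (hle _ _ _ a1 b1)
  | exact a2 (hle _ _ _ c1 b1)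
  | exact b2 (hle _ _ _ a1 c1)
  | exact c2 (hle _ _ _ b1 a1)
  | exact b2 (hle _ _ _ (hle _ _ _ c1 c1) b1)
  | exact a2 (hle _ _ _ (hle _ _ _ c1 c1) a1)
end

section
/- If a set X contains at least 4 pairwise distinct elements, then no binary relation R on X is both anti-transitive and such that its incomparability relation R⁸ is left-unique. -/
/-- On a set with at least 4 pairwise distinct elements, no relation is both
anti-transitive and such that its incomparability relation `R⁸` is left-unique. -/
theorem no_antitrans_and_r8_leftUnique {X : Type*}
    (h4 : ∃ a b c d : X, a ≠ b ∧ a ≠ c ∧ a ≠ d ∧ b ≠ c ∧ b ≠ d ∧ c ≠ d)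
    (R : X → X → Prop) :
    ¬ ((∀ x y z, R x y → R y z → ¬ R x z) ∧
       (∀ x₁ x₂ y, (¬ R x₁ y ∧ ¬ R y x₁) → (¬ R x₂ y ∧ ¬ R y x₂) → x₁ = x₂)) := by
  rintro ⟨anti, lu⟩
  obtain ⟨a, b, c, d, hab, hac, had, hbc, hbd, hcd⟩ := h4
  have irr : ∀ x, ¬ R x x := fun x h => anti x x x h h h
  have tot : ∀ x y : X, x ≠ y → R x y ∨ R y x := by
    intro x y hxy
    by_contra h
    push_neg at h
    exact hxy (lu x y y ⟨h.1, h.2⟩ ⟨irr y, irr y⟩)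
  have key : ∀ x y z, y ≠ z → R x y → R x z → False := by
    intro x y z hyz h1 h2
    rcases tot y z hyz with h | h
    · exact anti x y z h1 h h2
    · exact anti x z y h2 h h1
  have key2 : ∀ x y z, y ≠ z → R y x → R z x → False := by
    intro x y z hyz h1 h2
    rcases tot y z hyz with h | h
    · exact anti y z x h h2 h1
    · exact anti z y x h h1 h2
  rcases tot a b hab with h1 | h1 <;> rcases tot a c hac with h2 | h2 <;>
    rcases tot a d had with h3 | h3
  all_goals first
    | exact key a b c hbc h1 h2
    | exact key a b d hbd h1 h3
    | exact key a c d hcd h2 h3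
    | exact key2 a b c hbc h1 h2
    | exact key2 a b d hbd h1 h3
    | exact key2 a c d hcd h2 h3
end

section
/- If a set X contains at least 4 pairwise distinct elements, R is a binary relation on X that is left-unique, and the incomparability relation R⁸ is transitive, then the relation R⁶ is anti-transitive. -/
/-- In the presence of 4 pairwise distinct elements, a directed 3-cycle in a
left-unique relation with transitive incomparability is impossible. -/
lemma no_cycle {X : Type*}
    (h4 : ∃ a b c d : X, a ≠ b ∧ a ≠ c ∧ a ≠ d ∧ b ≠ c ∧ b ≠ d ∧ c ≠ d)
    (R : X → X → Prop)
    (hlu : ∀ x₁ x₂ y, R x₁ y → R x₂ y → x₁ = x₂)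
    (h8tr : ∀ x y z, (¬ R x y ∧ ¬ R y x) → (¬ R y z ∧ ¬ R z y) →
      (¬ R x z ∧ ¬ R z x))
    (x y z : X) (hxy : R x y) (hyz : R y z) (hzx : R z x)
    (hyx : ¬ R y x) (hzy : ¬ R z y) (hxz : ¬ R x z) : False := by
  have hxney : x ≠ y := by rintro rfl; exact hyx hxy
  have hynez : y ≠ z := by rintro rfl; exact hzy hyz
  have hxnez : x ≠ z := by rintro rfl; exact hxz hzx
  -- obtain w distinct from x, y, z
  obtain ⟨w, hwx, hwy, hwz⟩ : ∃ w : X, w ≠ x ∧ w ≠ y ∧ w ≠ z := by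
    by_contra h
    push_neg at h
    obtain ⟨a, b, c, d, hab, hac, had, hbc, hbd, hcd⟩ := h4
    have h' : ∀ w : X, w = x ∨ w = y ∨ w = z := fun w => by
      rcases eq_or_ne w x with hw | hw
      · exact Or.inl hw
      rcases eq_or_ne w y with hw' | hw'
      · exact Or.inr (Or.inl hw')
      exact Or.inr (Or.inr (h w hw hw'))
    rcases h' a with rfl | rfl | rfl <;> rcases h' b with rfl | rfl | rfl <;>
      rcases h' c with rfl | rfl | rfl <;> rcases h' d with rfl | rfl | rfl <;>
      exact absurd rfl (by assumption)
  have hRwx : ¬ R w x := fun h => hwz (hlu w z x h hzx)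
  have hRwy : ¬ R w y := fun h => hwx (hlu w x y h hxy)
  have hRwz : ¬ R w z := fun h => hwy (hlu w y z h hyz)
  by_cases hxw : R x w
  · have hyw : ¬ R y w := fun h => hxney (hlu x y w hxw h)
    have hzw : ¬ R z w := fun h => hxnez (hlu x z w hxw h)
    exact (h8tr y w z ⟨hyw, hRwy⟩ ⟨hRwz, hzw⟩).1 hyz
  · have hyw : R y w := by
      by_contra hyw
      exact (h8tr x w y ⟨hxw, hRwx⟩ ⟨hRwy, hyw⟩).1 hxy
    have hzw : R z w := by
      by_contra hzw
      exact (h8tr x w z ⟨hxw, hRwx⟩ ⟨hRwz, hzw⟩).2 hzx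
    exact hynez (hlu y z w hyw hzw)

/-- On a set with at least 4 pairwise distinct elements, if `R` is left-unique and
`R⁸` is transitive, then `R⁶` is anti-transitive. -/
theorem leftUnique_r8trans_imp_r6_antitrans {X : Type*}
    (h4 : ∃ a b c d : X, a ≠ b ∧ a ≠ c ∧ a ≠ d ∧ b ≠ c ∧ b ≠ d ∧ c ≠ d)
    (R : X → X → Prop)
    (hlu : ∀ x₁ x₂ y, R x₁ y → R x₂ y → x₁ = x₂)
    (h8tr : ∀ x y z, (¬ R x y ∧ ¬ R y x) → (¬ R y z ∧ ¬ R z y) →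
      (¬ R x z ∧ ¬ R z x)) :
    ∀ x y z, ((R x y ∧ ¬ R y x) ∨ (R y x ∧ ¬ R x y)) →
      ((R y z ∧ ¬ R z y) ∨ (R z y ∧ ¬ R y z)) →
      ¬ ((R x z ∧ ¬ R z x) ∨ (R z x ∧ ¬ R x z)) := by
  rintro x y z (⟨h1, h1'⟩ | ⟨h1, h1'⟩) (⟨h2, h2'⟩ | ⟨h2, h2'⟩)
    (⟨h3, h3'⟩ | ⟨h3, h3'⟩)
  · have e := hlu x y z h3 h2; subst e; exact h1' h1
  · exact no_cycle h4 R hlu h8tr x y z h1 h2 h3 h1' h2' h3'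
  · have e := hlu x z y h1 h2; subst e; exact h3' h3
  · have e := hlu x z y h1 h2; subst e; exact h3' h3
  · have e := hlu y x z h2 h3; subst e; exact h1' h1
  · have e := hlu y z x h1 h3; subst e; exact h2' h2
  · exact no_cycle h4 R hlu h8tr z y x h2 h1 h3 h2' h1' h3'
  · have e := hlu y z x h1 h3; subst e; exact h2' h2
end

section
/- If a set X contains at least 5 pairwise distinct elements and R is a binary relation on X that is left-unique and satisfies semi-order property 2, then the asymmetric kernel R² satisfies semi-order property 2. -/
/-- On a set with at least 5 pairwise distinct elements, if `R` is left-unique and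
satisfies semi-order property 2, then `R²` satisfies semi-order property 2. -/
theorem leftUnique_semiOrd2_imp_r2_semiOrd2 {X : Type*}
    (h5 : ∃ a b c d e : X, a ≠ b ∧ a ≠ c ∧ a ≠ d ∧ a ≠ e ∧ b ≠ c ∧ b ≠ d ∧
      b ≠ e ∧ c ≠ d ∧ c ≠ e ∧ d ≠ e)
    (R : X → X → Prop)
    (hlu : ∀ x₁ x₂ y, R x₁ y → R x₂ y → x₁ = x₂)
    (hso2 : ∀ w x y z, R x y → R y z →
      (R w x ∨ R x w ∨ R w y ∨ R y w ∨ R w z ∨ R z w)) :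
    ∀ w x y z, (R x y ∧ ¬ R y x) → (R y z ∧ ¬ R z y) →
      ((R w x ∧ ¬ R x w) ∨ (R x w ∧ ¬ R w x) ∨ (R w y ∧ ¬ R y w) ∨
       (R y w ∧ ¬ R w y) ∨ (R w z ∧ ¬ R z w) ∨ (R z w ∧ ¬ R w z)) := by
  rintro w x y z ⟨hxy, hnyx⟩ ⟨hyz, hnzy⟩
  by_cases hwx : w = x
  · subst hwx; exact Or.inr (Or.inr (Or.inl ⟨hxy, hnyx⟩))
  by_cases hwy : w = y
  · subst hwy; exact Or.inr (Or.inr (Or.inr (Or.inr (Or.inl ⟨hyz, hnzy⟩))))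
  by_cases hwz : w = z
  · subst hwz; exact Or.inr (Or.inr (Or.inr (Or.inl ⟨hyz, hnzy⟩)))
  have hxny : x ≠ y := fun h => hnyx (h ▸ hxy)
  have hxnz : x ≠ z := fun h => hnyx (h ▸ hyz)
  -- key: cannot have both R w x and R x w
  have key : R w x → R x w → False := by
    intro h1 h2
    rcases hso2 z x w x h2 h1 with h | h | h | h | h | h
    · exact hwz (hlu w z x h1 h)
    · exact hxny (hlu x y z h hyz)
    · exact hxnz (hlu z x w h h2).symm
    · exact hwy (hlu w y z h hyz)
    · exact hwz (hlu w z x h1 h)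
    · exact hxny (hlu x y z h hyz)
  rcases hso2 w x y z hxy hyz with h | h | h | h | h | h
  · by_cases h2 : R x w
    · exact absurd (key h h2) not_false
    · exact Or.inl ⟨h, h2⟩
  · by_cases h2 : R w x
    · exact absurd (key h2 h) not_false
    · exact Or.inr (Or.inl ⟨h, h2⟩)
  · exact absurd (hlu w x y h hxy) hwx
  · by_cases h2 : R w y
    · exact absurd (hlu w x y h2 hxy) hwx
    · exact Or.inr (Or.inr (Or.inr (Or.inl ⟨h, h2⟩)))
  · exact absurd (hlu w y z h hyz) hwy
  · by_cases h2 : R w z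
    · exact absurd (hlu w y z h2 hyz) hwy
    · exact Or.inr (Or.inr (Or.inr (Or.inr (Or.inr ⟨h, h2⟩))))
end

section
/- If a set X contains at least 5 pairwise distinct elements, R is a binary relation on X that is left-unique, and the relation R⁴ is left-unique, then the incomparability relation R⁸ is dense. -/
/-- On a set with at least 5 pairwise distinct elements, if `R` and `R⁴` (defined by
`x R⁴ y ↔ y R x ∧ ¬ x R y`) are left-unique, then `R⁸` is dense. -/
theorem leftUnique_r4_leftUnique_imp_r8_dense {X : Type*}
    (h5 : ∃ a b c d e : X, a ≠ b ∧ a ≠ c ∧ a ≠ d ∧ a ≠ e ∧ b ≠ c ∧ b ≠ d ∧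
      b ≠ e ∧ c ≠ d ∧ c ≠ e ∧ d ≠ e)
    (R : X → X → Prop)
    (hlu : ∀ x₁ x₂ y, R x₁ y → R x₂ y → x₁ = x₂)
    (hlu4 : ∀ x₁ x₂ y, (R y x₁ ∧ ¬ R x₁ y) → (R y x₂ ∧ ¬ R x₂ y) → x₁ = x₂) :
    ∀ x z, (¬ R x z ∧ ¬ R z x) →
      ∃ y, (¬ R x y ∧ ¬ R y x) ∧ (¬ R y z ∧ ¬ R z y) := by
  intro x z _hxz
  obtain ⟨a, b, c, d, e, hab, hac, had, hae, hbc, hbd, hbe, hcd, hce, hde⟩ := h5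
  by_contra hno
  have bad : ∀ y, R y x ∨ (R x y ∧ ¬ R y x) ∨ R y z ∨ (R z y ∧ ¬ R y z) := by
    intro y
    by_cases h1 : R y x
    · exact Or.inl h1
    by_cases h2 : R x y
    · exact Or.inr (Or.inl ⟨h2, h1⟩)
    by_cases h3 : R y z
    · exact Or.inr (Or.inr (Or.inl h3))
    by_cases h4 : R z y
    · exact Or.inr (Or.inr (Or.inr ⟨h4, h3⟩))
    exact absurd ⟨y, ⟨h2, h1⟩, ⟨h3, h4⟩⟩ hno
  have u1 : ∀ y1 y2, R y1 x → R y2 x → y1 = y2 := fun y1 y2 => hlu y1 y2 x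
  have u2 : ∀ y1 y2, (R x y1 ∧ ¬ R y1 x) → (R x y2 ∧ ¬ R y2 x) → y1 = y2 :=
    fun y1 y2 => hlu4 y1 y2 x
  have u3 : ∀ y1 y2, R y1 z → R y2 z → y1 = y2 := fun y1 y2 => hlu y1 y2 z
  have u4 : ∀ y1 y2, (R z y1 ∧ ¬ R y1 z) → (R z y2 ∧ ¬ R y2 z) → y1 = y2 :=
    fun y1 y2 => hlu4 y1 y2 z
  rcases bad a with ha | ha | ha | ha <;>
  rcases bad b with hb | hb | hb | hb <;>
  rcases bad c with hc | hc | hc | hc <;>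
  rcases bad d with hd | hd | hd | hd <;>
  rcases bad e with he | he | he | he <;>
  first
    | exact hab (u1 _ _ ha hb)
    | exact hab (u2 _ _ ha hb)
    | exact hab (u3 _ _ ha hb)
    | exact hab (u4 _ _ ha hb)
    | exact hac (u1 _ _ ha hc)
    | exact hac (u2 _ _ ha hc)
    | exact hac (u3 _ _ ha hc)
    | exact hac (u4 _ _ ha hc)
    | exact had (u1 _ _ ha hd)
    | exact had (u2 _ _ ha hd)
    | exact had (u3 _ _ ha hd)
    | exact had (u4 _ _ ha hd)
    | exact hae (u1 _ _ ha he)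
    | exact hae (u2 _ _ ha he)
    | exact hae (u3 _ _ ha he)
    | exact hae (u4 _ _ ha he)
    | exact hbc (u1 _ _ hb hc)
    | exact hbc (u2 _ _ hb hc)
    | exact hbc (u3 _ _ hb hc)
    | exact hbc (u4 _ _ hb hc)
    | exact hbd (u1 _ _ hb hd)
    | exact hbd (u2 _ _ hb hd)
    | exact hbd (u3 _ _ hb hd)
    | exact hbd (u4 _ _ hb hd)
    | exact hbe (u1 _ _ hb he)
    | exact hbe (u2 _ _ hb he)
    | exact hbe (u3 _ _ hb he)
    | exact hbe (u4 _ _ hb he)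
    | exact hcd (u1 _ _ hc hd)
    | exact hcd (u2 _ _ hc hd)
    | exact hcd (u3 _ _ hc hd)
    | exact hcd (u4 _ _ hc hd)
    | exact hce (u1 _ _ hc he)
    | exact hce (u2 _ _ hc he)
    | exact hce (u3 _ _ hc he)
    | exact hce (u4 _ _ hc he)
    | exact hde (u1 _ _ hd he)
    | exact hde (u2 _ _ hd he)
    | exact hde (u3 _ _ hd he)
    | exact hde (u4 _ _ hd he)
end

section
/- If a set X contains at least 5 pairwise distinct elements, and both the symmetric kernel R¹ and the incomparability relation R⁸ of a binary relation R on X are left-unique, then the relation R⁶ is dense. -/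
private lemma r6_key {X : Type*} (R : X → X → Prop)
    (hlu1 : ∀ x₁ x₂ y, (R x₁ y ∧ R y x₁) → (R x₂ y ∧ R y x₂) → x₁ = x₂)
    (hlu8 : ∀ x₁ x₂ y, (¬ R x₁ y ∧ ¬ R y x₁) → (¬ R x₂ y ∧ ¬ R y x₂) → x₁ = x₂)
    (w y y' y'' : X) (h1 : y ≠ y') (h2 : y ≠ y'') (h3 : y' ≠ y'')
    (hy : ¬((R w y ∧ ¬ R y w) ∨ (R y w ∧ ¬ R w y)))
    (hy' : ¬((R w y' ∧ ¬ R y' w) ∨ (R y' w ∧ ¬ R w y')))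
    (hy'' : ¬((R w y'' ∧ ¬ R y'' w) ∨ (R y'' w ∧ ¬ R w y''))) : False := by
  have C : ∀ u, ¬((R w u ∧ ¬ R u w) ∨ (R u w ∧ ¬ R w u)) →
      (R u w ∧ R w u) ∨ (¬ R u w ∧ ¬ R w u) := by
    intro u hu
    by_cases hA : R w u <;> by_cases hB : R u w
    · exact Or.inl ⟨hB, hA⟩
    · exact absurd (Or.inl ⟨hA, hB⟩) hu
    · exact absurd (Or.inr ⟨hB, hA⟩) hu
    · exact Or.inr ⟨hB, hA⟩
  rcases C y hy with c1 | c1 <;> rcases C y' hy' with c2 | c2 <;>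
    rcases C y'' hy'' with c3 | c3
  · exact h1 (hlu1 y y' w c1 c2)
  · exact h1 (hlu1 y y' w c1 c2)
  · exact h2 (hlu1 y y'' w c1 c3)
  · exact h3 (hlu8 y' y'' w c2 c3)
  · exact h3 (hlu1 y' y'' w c2 c3)
  · exact h2 (hlu8 y y'' w c1 c3)
  · exact h1 (hlu8 y y' w c1 c2)
  · exact h1 (hlu8 y y' w c1 c2)

/-- On a set with at least 5 pairwise distinct elements, if the symmetric kernel `R¹`
and the incomparability relation `R⁸` are left-unique, then `R⁶` is dense. -/
theorem r1_r8_leftUnique_imp_r6_dense {X : Type*}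
    (h5 : ∃ a b c d e : X, a ≠ b ∧ a ≠ c ∧ a ≠ d ∧ a ≠ e ∧ b ≠ c ∧ b ≠ d ∧
      b ≠ e ∧ c ≠ d ∧ c ≠ e ∧ d ≠ e)
    (R : X → X → Prop)
    (hlu1 : ∀ x₁ x₂ y, (R x₁ y ∧ R y x₁) → (R x₂ y ∧ R y x₂) → x₁ = x₂)
    (hlu8 : ∀ x₁ x₂ y, (¬ R x₁ y ∧ ¬ R y x₁) → (¬ R x₂ y ∧ ¬ R y x₂) → x₁ = x₂) :
    ∀ x z, ((R x z ∧ ¬ R z x) ∨ (R z x ∧ ¬ R x z)) →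
      ∃ y, ((R x y ∧ ¬ R y x) ∨ (R y x ∧ ¬ R x y)) ∧
           ((R y z ∧ ¬ R z y) ∨ (R z y ∧ ¬ R y z)) := by
  obtain ⟨a, b, c, d, e, hab, hac, had, hae, hbc, hbd, hbe, hcd, hce, hde⟩ := h5
  intro x z _
  by_contra hcon
  push_neg at hcon
  have KX := r6_key R hlu1 hlu8 x
  have KZ := r6_key R hlu1 hlu8 z
  have step : ∀ v : X, ¬((R x v ∧ ¬ R v x) ∨ (R v x ∧ ¬ R x v)) ∨
      ¬((R v z ∧ ¬ R z v) ∨ (R z v ∧ ¬ R v z)) := by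
    intro v
    by_cases h : (R x v ∧ ¬ R v x) ∨ (R v x ∧ ¬ R x v)
    · obtain ⟨p, q⟩ := hcon v h
      refine Or.inr ?_
      rintro (⟨r, s⟩ | ⟨r, s⟩)
      · exact s (p r)
      · exact s (q r)
    · exact Or.inl h
  have KZ' : ∀ y y' y'' : X, y ≠ y' → y ≠ y'' → y' ≠ y'' →
      ¬((R y z ∧ ¬ R z y) ∨ (R z y ∧ ¬ R y z)) →
      ¬((R y' z ∧ ¬ R z y') ∨ (R z y' ∧ ¬ R y' z)) →
      ¬((R y'' z ∧ ¬ R z y'') ∨ (R z y'' ∧ ¬ R y'' z)) → False := by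
    intro y y' y'' n1 n2 n3 g1 g2 g3
    refine KZ y y' y'' n1 n2 n3 ?_ ?_ ?_ <;>
      rintro (⟨p, q⟩ | ⟨p, q⟩)
    · exact g1 (Or.inr ⟨p, q⟩)
    · exact g1 (Or.inl ⟨p, q⟩)
    · exact g2 (Or.inr ⟨p, q⟩)
    · exact g2 (Or.inl ⟨p, q⟩)
    · exact g3 (Or.inr ⟨p, q⟩)
    · exact g3 (Or.inl ⟨p, q⟩)
  rcases step a with ha | ha <;> rcases step b with hb | hb <;>
    rcases step c with hc | hc <;> rcases step d with hd | hd <;>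
    rcases step e with he | he <;>
  first
    | exact KX a b c hab hac hbc ha hb hc
    | exact KX a b d hab had hbd ha hb hd
    | exact KX a b e hab hae hbe ha hb he
    | exact KX a c d hac had hcd ha hc hd
    | exact KX a c e hac hae hce ha hc he
    | exact KX a d e had hae hde ha hd he
    | exact KX b c d hbc hbd hcd hb hc hd
    | exact KX b c e hbc hbe hce hb hc he
    | exact KX b d e hbd hbe hde hb hd he
    | exact KX c d e hcd hce hde hc hd he
    | exact KZ' a b c hab hac hbc ha hb hc
    | exact KZ' a b d hab had hbd ha hb hd
    | exact KZ' a b e hab hae hbe ha hb he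
    | exact KZ' a c d hac had hcd ha hc hd
    | exact KZ' a c e hac hae hce ha hc he
    | exact KZ' a d e had hae hde ha hd he
    | exact KZ' b c d hbc hbd hcd hb hc hd
    | exact KZ' b c e hbc hbe hce hb hc he
    | exact KZ' b d e hbd hbe hde hb hd he
    | exact KZ' c d e hcd hce hde hc hd he
end

section
/- If a binary relation R on a set X and its complement Rᶜ both satisfy semi-order property 2, then the asymmetric kernel R² satisfies semi-order property 2. -/
/-- If both `R` and its complement satisfy semi-order property 2, then `R²`
satisfies semi-order property 2. -/
theorem so2_and_complement_so2_imp_r2_so2 {X : Type*} (R : X → X → Prop)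
    (hso2 : ∀ w x y z, R x y → R y z →
      (R w x ∨ R x w ∨ R w y ∨ R y w ∨ R w z ∨ R z w))
    (hso2c : ∀ w x y z, ¬ R x y → ¬ R y z →
      (¬ R w x ∨ ¬ R x w ∨ ¬ R w y ∨ ¬ R y w ∨ ¬ R w z ∨ ¬ R z w)) :
    ∀ w x y z, (R x y ∧ ¬ R y x) → (R y z ∧ ¬ R z y) →
      ((R w x ∧ ¬ R x w) ∨ (R x w ∧ ¬ R w x) ∨ (R w y ∧ ¬ R y w) ∨
       (R y w ∧ ¬ R w y) ∨ (R w z ∧ ¬ R z w) ∨ (R z w ∧ ¬ R w z)) := by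
  intro w x y z hxy hyz
  obtain ⟨hxy, hyx⟩ := hxy
  obtain ⟨hyz, hzy⟩ := hyz
  -- a two-sided tie with `w` forces `R w w`
  have tw : ∀ v, R w v → R v w → R w w := by
    intro v h1 h2
    by_contra hww
    rcases hso2c v w w w hww hww with h | h | h | h | h | h <;>
      first | exact h h1 | exact h h2
  -- a two-sided non-tie with `w` forces `¬ R w w`
  have fw : ∀ v, ¬ R w v → ¬ R v w → ¬ R w w := by
    intro v h1 h2 hww
    rcases hso2 v w w w hww hww with h | h | h | h | h | h <;>
      first | exact h1 h | exact h2 h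
  -- given `R w w`, the complement property yields a strict pair
  have main2 : R w w →
      ((R w x ∧ ¬ R x w) ∨ (R x w ∧ ¬ R w x) ∨ (R w y ∧ ¬ R y w) ∨
       (R y w ∧ ¬ R w y) ∨ (R w z ∧ ¬ R z w) ∨ (R z w ∧ ¬ R w z)) := by
    intro hww
    rcases hso2c w z y x hzy hyx with g | g | g | g | g | g
    · by_cases g' : R z w
      · exact Or.inr (Or.inr (Or.inr (Or.inr (Or.inr ⟨g', g⟩))))
      · exact absurd hww (fw z g g')
    · by_cases g' : R w z
      · exact Or.inr (Or.inr (Or.inr (Or.inr (Or.inl ⟨g', g⟩))))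
      · exact absurd hww (fw z g' g)
    · by_cases g' : R y w
      · exact Or.inr (Or.inr (Or.inr (Or.inl ⟨g', g⟩)))
      · exact absurd hww (fw y g g')
    · by_cases g' : R w y
      · exact Or.inr (Or.inr (Or.inl ⟨g', g⟩))
      · exact absurd hww (fw y g' g)
    · by_cases g' : R x w
      · exact Or.inr (Or.inl ⟨g', g⟩)
      · exact absurd hww (fw x g g')
    · by_cases g' : R w x
      · exact Or.inl ⟨g', g⟩
      · exact absurd hww (fw x g' g)
  rcases hso2 w x y z hxy hyz with h | h | h | h | h | h
  · by_cases h' : R x w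
    · exact main2 (tw x h h')
    · exact Or.inl ⟨h, h'⟩
  · by_cases h' : R w x
    · exact main2 (tw x h' h)
    · exact Or.inr (Or.inl ⟨h, h'⟩)
  · by_cases h' : R y w
    · exact main2 (tw y h h')
    · exact Or.inr (Or.inr (Or.inl ⟨h, h'⟩))
  · by_cases h' : R w y
    · exact main2 (tw y h' h)
    · exact Or.inr (Or.inr (Or.inr (Or.inl ⟨h, h'⟩)))
  · by_cases h' : R z w
    · exact main2 (tw z h h')
    · exact Or.inr (Or.inr (Or.inr (Or.inr (Or.inl ⟨h, h'⟩))))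
  · by_cases h' : R w z
    · exact main2 (tw z h' h)
    · exact Or.inr (Or.inr (Or.inr (Or.inr (Or.inr ⟨h, h'⟩))))
end

section
/- If the asymmetric kernel R² of a binary relation R on a set X satisfies semi-order property 2 and the symmetric closure R⁷ is transitive, then the complement Rᶜ satisfies semi-order property 2. -/
/-- If `R²` satisfies semi-order property 2 and the symmetric closure `R⁷` is
transitive, then the complement `Rᶜ` satisfies semi-order property 2. -/
theorem r2_so2_r7_trans_imp_complement_so2 {X : Type*} (R : X → X → Prop)
    (hso2 : ∀ w x y z, (R x y ∧ ¬ R y x) → (R y z ∧ ¬ R z y) →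
      ((R w x ∧ ¬ R x w) ∨ (R x w ∧ ¬ R w x) ∨ (R w y ∧ ¬ R y w) ∨
       (R y w ∧ ¬ R w y) ∨ (R w z ∧ ¬ R z w) ∨ (R z w ∧ ¬ R w z)))
    (h7tr : ∀ x y z, (R x y ∨ R y x) → (R y z ∨ R z y) → (R x z ∨ R z x)) :
    ∀ w x y z, ¬ R x y → ¬ R y z →
      (¬ R w x ∨ ¬ R x w ∨ ¬ R w y ∨ ¬ R y w ∨ ¬ R w z ∨ ¬ R z w) := by
  intro w x y z hxy hyz
  by_contra h
  push_neg at h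
  obtain ⟨hwx, hxw, hwy, hyw, hwz, hzw⟩ := h
  have hyx : R y x := (h7tr y w x (Or.inl hyw) (Or.inl hwx)).resolve_right hxy
  have hzy : R z y := (h7tr z w y (Or.inl hzw) (Or.inl hwy)).resolve_right hyz
  have := hso2 w z y x ⟨hzy, hyz⟩ ⟨hyx, hxy⟩
  tauto
end
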